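/- arXiv:2405.20681 — 3 statements merged into one kernel-verified Lean document; each statement's English description precedes it below -/
import Mathlib

section
/- Let P and Q be probability measures on a measurable space with densities p and q with respect to a common dominating measure, and let f be a bounded measurable function with values in [0,1]. Suppose inf_{w : q(w) > p(w)} f(w) - sup_{w : p(w) > q(w)} f(w) ≥ c for some constant c ≥ 0. Then E_{Q}[f] - E_{P}[f] ≥ c · TV(P, Q), where TV denotes the total variation distance. -/
open MeasureTheory
open scoped ENNReal NNReal

/-- Total variation distance between two measures: `sup_A |P(A) - Q(A)|`
over measurable sets `A`. -/
noncomputable def tvDist {Ω : Type*} [MeasurableSpace Ω]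
    (P Q : Measure Ω) : ℝ :=
  ⨆ A : {A : Set Ω // MeasurableSet A}, |(P A).toReal - (Q A).toReal|

section Aux

variable {Ω : Type*} [MeasurableSpace Ω] (μ : Measure Ω)

lemma aux_int_one (p : Ω → ℝ) (hp : Measurable p) (hp0 : ∀ w, 0 ≤ p w)
    (h1 : μ.withDensity (fun w => ENNReal.ofReal (p w)) Set.univ = 1) :
    Integrable p μ ∧ ∫ w, p w ∂μ = 1 := by
  have hlint : ∫⁻ w, ENNReal.ofReal (p w) ∂μ = 1 := by
    rw [← setLIntegral_univ, ← withDensity_apply _ MeasurableSet.univ, h1]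
  have hint : Integrable p μ := by
    refine ⟨hp.aestronglyMeasurable, ?_⟩
    rw [hasFiniteIntegral_iff_ofReal (ae_of_all _ hp0), hlint]
    exact ENNReal.one_lt_top
  refine ⟨hint, ?_⟩
  have h := ofReal_integral_eq_lintegral_ofReal hint (ae_of_all _ hp0)
  rw [hlint] at h
  have h2 : 0 ≤ ∫ w, p w ∂μ := integral_nonneg hp0
  have h3 := congrArg ENNReal.toReal h
  rwa [ENNReal.toReal_ofReal h2, ENNReal.toReal_one] at h3

lemma aux_exp (p f : Ω → ℝ) (hp : Measurable p) (hp0 : ∀ w, 0 ≤ p w) :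
    ∫ w, f w ∂(μ.withDensity (fun w => ENNReal.ofReal (p w))) = ∫ w, f w * p w ∂μ := by
  have h : (fun w => ENNReal.ofReal (p w)) = fun w => ((p w).toNNReal : ℝ≥0∞) := rfl
  rw [h, integral_withDensity_eq_integral_smul (hp.real_toNNReal) f]
  refine integral_congr_ae (ae_of_all _ fun w => ?_)
  simp [NNReal.smul_def, Real.coe_toNNReal _ (hp0 w), mul_comm]

lemma aux_meas (p : Ω → ℝ) (hp0 : ∀ w, 0 ≤ p w) (hint : Integrable p μ)
    (S : Set Ω) (hS : MeasurableSet S) :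
    ((μ.withDensity (fun w => ENNReal.ofReal (p w))) S).toReal = ∫ w in S, p w ∂μ := by
  rw [withDensity_apply _ hS,
    ← ofReal_integral_eq_lintegral_ofReal hint.integrableOn (ae_of_all _ hp0),
    ENNReal.toReal_ofReal (setIntegral_nonneg hS fun w _ => hp0 w)]

end Aux

/-- if `inf_{q > p} f - sup_{p > q} f ≥ c ≥ 0` then
`E_Q[f] - E_P[f] ≥ c · TV(P, Q)`. -/
theorem expectation_gap_ge_tv {Ω : Type*} [MeasurableSpace Ω]
    (μ P Q : Measure Ω) [IsProbabilityMeasure P] [IsProbabilityMeasure Q]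
    (p q : Ω → ℝ) (hp : Measurable p) (hq : Measurable q)
    (hp0 : ∀ w, 0 ≤ p w) (hq0 : ∀ w, 0 ≤ q w)
    (hP : P = μ.withDensity (fun w => ENNReal.ofReal (p w)))
    (hQ : Q = μ.withDensity (fun w => ENNReal.ofReal (q w)))
    (f : Ω → ℝ) (hf : Measurable f) (hf01 : ∀ w, f w ∈ Set.Icc (0 : ℝ) 1)
    (c : ℝ) (hc : 0 ≤ c)
    (hgap : ∀ w w', q w > p w → p w' > q w' → f w - f w' ≥ c) :
    ∫ w, f w ∂Q - ∫ w, f w ∂P ≥ c * tvDist P Q := by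
  have hPuniv : μ.withDensity (fun w => ENNReal.ofReal (p w)) Set.univ = 1 := by
    rw [← hP]; exact measure_univ
  have hQuniv : μ.withDensity (fun w => ENNReal.ofReal (q w)) Set.univ = 1 := by
    rw [← hQ]; exact measure_univ
  obtain ⟨hpInt, hp1⟩ := aux_int_one μ p hp hp0 hPuniv
  obtain ⟨hqInt, hq1⟩ := aux_int_one μ q hq hq0 hQuniv
  set g : Ω → ℝ := fun w => q w - p w with hgdef
  have hgInt : Integrable g μ := hqInt.sub hpInt
  have hg0 : ∫ w, g w ∂μ = 0 := by
    simp only [hgdef]; rw [integral_sub hqInt hpInt, hq1, hp1]; ring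
  set A : Set Ω := {w | p w < q w} with hAdef
  set B : Set Ω := {w | q w < p w} with hBdef
  have hA : MeasurableSet A := measurableSet_lt hp hq
  have hB : MeasurableSet B := measurableSet_lt hq hp
  have hAB : Disjoint A B := by
    rw [Set.disjoint_left]
    intro w hw hw'
    simp only [hAdef, hBdef, Set.mem_setOf_eq] at hw hw'
    exact lt_asymm hw hw'
  have hgA : ∀ w ∈ A, 0 ≤ g w := fun w hw => sub_nonneg.2 (le_of_lt hw)
  have hgB : ∀ w ∈ B, g w ≤ 0 := fun w hw => sub_nonpos.2 (le_of_lt hw)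
  have hgAc : ∀ w ∉ A, g w ≤ 0 := by
    intro w hw
    simp only [hAdef, Set.mem_setOf_eq, not_lt] at hw
    exact sub_nonpos.2 hw
  have hgBc : ∀ w ∉ B, 0 ≤ g w := by
    intro w hw
    simp only [hBdef, Set.mem_setOf_eq, not_lt] at hw
    exact sub_nonneg.2 hw
  have hgrest : ∀ w ∉ A ∪ B, g w = 0 := by
    intro w hw
    simp only [hAdef, hBdef, Set.mem_union, Set.mem_setOf_eq, not_or, not_lt] at hw
    simp only [hgdef]; linarith [hw.1, hw.2]
  have hfbdd : ∃ C, ∀ x, ‖f x‖ ≤ C := by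
    refine ⟨1, fun x => ?_⟩
    rw [Real.norm_eq_abs, abs_le]
    exact ⟨by linarith [(hf01 x).1], (hf01 x).2⟩
  have hfgInt : Integrable (fun w => f w * g w) μ :=
    hgInt.bdd_mul hf.aestronglyMeasurable (ae_of_all _ hfbdd.choose_spec)
  -- splitting integrals over A and B
  have hsplitg : ∫ w in A, g w ∂μ + ∫ w in B, g w ∂μ = 0 := by
    rw [← setIntegral_union hAB hB hgInt.integrableOn hgInt.integrableOn,
      setIntegral_eq_integral_of_forall_compl_eq_zero hgrest, hg0]
  set IA : ℝ := ∫ w in A, g w ∂μ with hIAdef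
  have hIA0 : 0 ≤ IA := setIntegral_nonneg hA hgA
  have hIB : ∫ w in B, g w ∂μ = -IA := by linarith
  -- TV bound
  have htv : tvDist P Q ≤ IA := by
    refine ciSup_le ?_
    rintro ⟨S, hS⟩
    rw [hP, hQ, aux_meas μ p hp0 hpInt S hS, aux_meas μ q hq0 hqInt S hS]
    have hSg0 : ∫ w in S, g w ∂μ = ∫ w in S, q w ∂μ - ∫ w in S, p w ∂μ :=
      integral_sub hqInt.integrableOn hpInt.integrableOn
    have hSg : ∫ w in S, p w ∂μ - ∫ w in S, q w ∂μ = -∫ w in S, g w ∂μ := by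
      rw [hSg0]; ring
    rw [hSg, abs_neg, abs_le]
    constructor
    · -- -IA ≤ ∫_S g, i.e. ∫_B g ≤ ∫_S g
      rw [← hIB]
      have h1 : ∫ w in S ∩ B, g w ∂μ + ∫ w in S \ B, g w ∂μ = ∫ w in S, g w ∂μ :=
        integral_inter_add_diff hB hgInt.integrableOn
      have h2 : ∫ w in B ∩ S, g w ∂μ + ∫ w in B \ S, g w ∂μ = ∫ w in B, g w ∂μ :=
        integral_inter_add_diff hS hgInt.integrableOn
      have h3 : ∫ w in B \ S, g w ∂μ ≤ 0 :=
        setIntegral_nonpos (hB.diff hS) fun w hw => hgB w hw.1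
      have h4 : 0 ≤ ∫ w in S \ B, g w ∂μ :=
        setIntegral_nonneg (hS.diff hB) fun w hw => hgBc w hw.2
      rw [Set.inter_comm B S] at h2
      linarith
    · -- ∫_S g ≤ IA = ∫_A g
      have h1 : ∫ w in S ∩ A, g w ∂μ + ∫ w in S \ A, g w ∂μ = ∫ w in S, g w ∂μ :=
        integral_inter_add_diff hA hgInt.integrableOn
      have h2 : ∫ w in S ∩ A, g w ∂μ ≤ ∫ w in A, g w ∂μ :=
        setIntegral_mono_set hgInt.integrableOn
          (ae_restrict_of_forall_mem hA hgA) (ae_of_all _ Set.inter_subset_right)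
      have h3 : ∫ w in S \ A, g w ∂μ ≤ 0 :=
        setIntegral_nonpos (hS.diff hA) fun w hw => hgAc w hw.2
      rw [hIAdef]; linarith
  -- expectation gap equals ∫ f g dμ
  have hE : ∫ w, f w ∂Q - ∫ w, f w ∂P = ∫ w, f w * g w ∂μ := by
    rw [hP, hQ, aux_exp μ q f hq hq0, aux_exp μ p f hp hp0]
    have hfp : Integrable (fun w => f w * p w) μ :=
      hpInt.bdd_mul hf.aestronglyMeasurable (ae_of_all _ hfbdd.choose_spec)
    have hfq : Integrable (fun w => f w * q w) μ :=
      hqInt.bdd_mul hf.aestronglyMeasurable (ae_of_all _ hfbdd.choose_spec)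
    rw [← integral_sub hfq hfp]
    refine integral_congr_ae (ae_of_all _ fun w => ?_)
    simp [hgdef]; ring
  have hfgrest : ∀ w ∉ A ∪ B, f w * g w = 0 := fun w hw => by rw [hgrest w hw, mul_zero]
  have hsplitfg : ∫ w, f w * g w ∂μ
      = ∫ w in A, f w * g w ∂μ + ∫ w in B, f w * g w ∂μ := by
    rw [← setIntegral_union hAB hB hfgInt.integrableOn hfgInt.integrableOn,
      setIntegral_eq_integral_of_forall_compl_eq_zero hfgrest]
  -- main bound : ∫ f g ≥ c * IA
  have hmain : c * IA ≤ ∫ w, f w * g w ∂μ := by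
    rcases Set.eq_empty_or_nonempty B with hBe | ⟨b, hb⟩
    · have hIAz : IA = 0 := by
        have : ∫ w in B, g w ∂μ = 0 := by rw [hBe]; simp
        linarith [hIB, this]
      have hAnn : 0 ≤ ∫ w in A, f w * g w ∂μ :=
        setIntegral_nonneg hA fun w hw => mul_nonneg (hf01 w).1 (hgA w hw)
      have hBz : ∫ w in B, f w * g w ∂μ = 0 := by rw [hBe]; simp
      rw [hsplitfg, hIAz, hBz]; linarith
    · set M : ℝ := sSup (f '' B) with hMdef
      have hBne : (f '' B).Nonempty := ⟨f b, b, hb, rfl⟩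
      have hbdd : BddAbove (f '' B) := by
        refine ⟨1, ?_⟩; rintro _ ⟨w, _, rfl⟩; exact (hf01 w).2
      have hMle : ∀ w ∈ B, f w ≤ M := fun w hw => le_csSup hbdd ⟨w, hw, rfl⟩
      have hMA : ∀ w ∈ A, M + c ≤ f w := by
        intro w hw
        have h1 : M ≤ f w - c := by
          refine csSup_le hBne ?_
          rintro _ ⟨w', hw', rfl⟩
          have := hgap w w' hw hw'
          linarith
        linarith
      have lowA : (M + c) * IA ≤ ∫ w in A, f w * g w ∂μ := by
        have h1 : ∫ w in A, (M + c) * g w ∂μ ≤ ∫ w in A, f w * g w ∂μ := by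
          refine setIntegral_mono_on (hgInt.integrableOn.const_mul _)
            hfgInt.integrableOn hA fun w hw => ?_
          exact mul_le_mul_of_nonneg_right (hMA w hw) (hgA w hw)
        rwa [integral_const_mul] at h1
      have lowB : M * (-IA) ≤ ∫ w in B, f w * g w ∂μ := by
        have h1 : ∫ w in B, M * g w ∂μ ≤ ∫ w in B, f w * g w ∂μ := by
          refine setIntegral_mono_on (hgInt.integrableOn.const_mul _)
            hfgInt.integrableOn hB fun w hw => ?_
          exact mul_le_mul_of_nonpos_right (hMle w hw) (hgB w hw)
        rwa [integral_const_mul, hIB] at h1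
      rw [hsplitfg]
      nlinarith
  have hfinal : c * tvDist P Q ≤ c * IA := mul_le_mul_of_nonneg_left htv hc
  rw [ge_iff_le, hE]
  linarith
end

section
/- Let U : W → ℝ be a bounded measurable utility function on a measurable space W, let P and P̃ be probability measures on W with densities with respect to a common dominating measure, and let w* attain the supremum of U over the union of the supports of P and P̃. Let α > 0 and define W_α = {w : U(w*) − U(w) ≤ α}. Assume: (i) P is supported on the set of maximizers of U (i.e., U(w) = U(w*) P-almost surely); (ii) ∫ 1{w ∈ W_α} dP̃(w) ≤ TV(P, P̃)/2. Then E_P[U] − E_{P̃}[U] ≥ (α/2) · TV(P, P̃). -/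
open MeasureTheory

/-- utility loss is lower bounded by `(α/2) · TV(P, P̃)`. -/
theorem utility_loss_ge_tv {W : Type*} [MeasurableSpace W]
    (μ P Ptilde : Measure W) [IsProbabilityMeasure P] [IsProbabilityMeasure Ptilde]
    (p ptilde : W → ℝ) (hp : Measurable p) (hptilde : Measurable ptilde)
    (hp0 : ∀ w, 0 ≤ p w) (hptilde0 : ∀ w, 0 ≤ ptilde w)
    (hP : P = μ.withDensity (fun w => ENNReal.ofReal (p w)))
    (hPt : Ptilde = μ.withDensity (fun w => ENNReal.ofReal (ptilde w)))
    (U : W → ℝ) (hU : Measurable U) (M : ℝ) (hUbdd : ∀ w, |U w| ≤ M)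
    (wstar : W)
    (hwstar_mem : p wstar > 0 ∨ ptilde wstar > 0)
    (hwstar_max : ∀ w, (p w > 0 ∨ ptilde w > 0) → U w ≤ U wstar)
    (α : ℝ) (hα : 0 < α)
    (hmax : ∀ᵐ w ∂P, U w = U wstar)
    (hmass : (Ptilde {w | U wstar - U w ≤ α}).toReal ≤ tvDist P Ptilde / 2) :
    ∫ w, U w ∂P - ∫ w, U w ∂Ptilde ≥ (α / 2) * tvDist P Ptilde := by
  classical
  have hT1 : tvDist P Ptilde ≤ 1 := by
    apply ciSup_le
    rintro ⟨A, hA⟩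
    have h1 : (P A).toReal ≤ 1 := by
      simpa using ENNReal.toReal_mono ENNReal.one_ne_top (prob_le_one (μ := P) (s := A))
    have h2 : (Ptilde A).toReal ≤ 1 := by
      simpa using ENNReal.toReal_mono ENNReal.one_ne_top (prob_le_one (μ := Ptilde) (s := A))
    have h3 : 0 ≤ (P A).toReal := ENNReal.toReal_nonneg
    have h4 : 0 ≤ (Ptilde A).toReal := ENNReal.toReal_nonneg
    rw [abs_sub_le_iff]
    constructor <;> linarith
  have hEP : ∫ w, U w ∂P = U wstar := by
    rw [integral_congr_ae hmax]
    simp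
  -- Ptilde-a.e. positivity of the density
  have hNmeas : MeasurableSet {w | ptilde w ≤ 0} :=
    measurableSet_le hptilde measurable_const
  have hN : Ptilde {w | ptilde w ≤ 0} = 0 := by
    rw [hPt, withDensity_apply _ hNmeas]
    have hzero : ∫⁻ w in {w | ptilde w ≤ 0}, ENNReal.ofReal (ptilde w) ∂μ
        = ∫⁻ _ in {w | ptilde w ≤ 0}, (0 : ENNReal) ∂μ :=
      setLIntegral_congr_fun hNmeas (fun w hw => by
        simp only [Set.mem_setOf_eq] at hw
        simp [ENNReal.ofReal_eq_zero.mpr hw])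
    rw [hzero]
    simp
  have hpt_pos : ∀ᵐ w ∂Ptilde, 0 < ptilde w := by
    rw [ae_iff]
    convert hN using 2
    ext w
    simp [not_lt]
  have hUle : ∀ᵐ w ∂Ptilde, U w ≤ U wstar :=
    hpt_pos.mono fun w hw => hwstar_max w (Or.inr hw)
  set S : Set W := {w | U wstar - U w ≤ α} with hSdef
  have hS : MeasurableSet S :=
    measurableSet_le (measurable_const.sub hU) measurable_const
  set g : W → ℝ := fun w => (U wstar - α) + α * S.indicator (fun _ => (1:ℝ)) w with hgdef
  have hUg : ∀ᵐ w ∂Ptilde, U w ≤ g w := by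
    refine hUle.mono fun w hw => ?_
    by_cases h : w ∈ S
    · simp only [hgdef, Set.indicator_of_mem h, mul_one]
      linarith
    · simp only [hgdef, Set.indicator_of_notMem h, mul_zero, add_zero]
      have h' : α < U wstar - U w := not_le.mp h
      linarith
  have hIntU : Integrable U Ptilde :=
    (integrable_const M).mono' hU.aestronglyMeasurable
      (ae_of_all _ fun w => by simpa using hUbdd w)
  have hIntInd : Integrable (S.indicator fun _ => (1:ℝ)) Ptilde :=
    (integrable_const (1:ℝ)).indicator hS
  have hIntg : Integrable g Ptilde := by
    exact (integrable_const _).add (hIntInd.const_mul α)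
  have hgint : ∫ w, g w ∂Ptilde = (U wstar - α) + α * (Ptilde S).toReal := by
    simp only [hgdef]
    rw [integral_add (integrable_const _) (hIntInd.const_mul α),
        integral_const, integral_const_mul, integral_indicator_const _ hS]
    simp [Measure.real]
  have hle : ∫ w, U w ∂Ptilde ≤ (U wstar - α) + α * (Ptilde S).toReal := by
    rw [← hgint]
    exact integral_mono_ae hIntU hIntg hUg
  have hmul : α * (Ptilde S).toReal ≤ α * (tvDist P Ptilde / 2) :=
    mul_le_mul_of_nonneg_left hmass hα.le
  rw [hEP]
  nlinarith [hT1, hα, hle, hmul]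
end

section
/- Suppose ε_p = R(P̃) − R(P̆) where R takes values in [0,1], R(P̃) = E_{w∼P̃}[R(w)], R(P̆) = E_{w∼P̆}[R(w)], and R(w) ≥ 1 − (c_b + c₂c_b I^{p−1})/Ω on the support of P̃ with R(w̃) − R(w) ≥ R(w̃)/c for all w in supp(P̆), w̃ in supp(P̃). Then ε_p ≥ C₁ · TV(P̃, P̆) with C₁ = (1 − (c_b + c₂c_b I^{p−1})/Ω)/c, provided c_b + c_b c₂ ≤ Ω, c > 0, I > 0, p ≤ 1. -/
open MeasureTheory

lemma ae_density_pos {W : Type*} [MeasurableSpace W] (μ : Measure W) (f : W → ℝ)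
    (hf : Measurable f) (hf0 : ∀ w, 0 ≤ f w) :
    ∀ᵐ w ∂(μ.withDensity fun w => ENNReal.ofReal (f w)), 0 < f w := by
  rw [ae_iff]
  have hset : {w | ¬ 0 < f w} = {w | f w ≤ 0} := by ext w; simp [not_lt]
  have hs : MeasurableSet {w | f w ≤ 0} := measurableSet_le hf measurable_const
  rw [hset, withDensity_apply _ hs]
  have : ∀ᵐ w ∂μ, w ∈ {w | f w ≤ 0} → ENNReal.ofReal (f w) = (0 : ENNReal) := by
    filter_upwards with w hw
    simp [ENNReal.ofReal_eq_zero.2 hw]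
  rw [setLIntegral_congr_fun_ae hs this]
  simp

lemma tvDist_le_one {W : Type*} [MeasurableSpace W] (P Q : Measure W)
    [IsProbabilityMeasure P] [IsProbabilityMeasure Q] : tvDist P Q ≤ 1 := by
  have : Nonempty {A : Set W // MeasurableSet A} := ⟨⟨∅, MeasurableSet.empty⟩⟩
  refine ciSup_le fun A => ?_
  have h1 : (P A.1).toReal ≤ 1 := by
    have := prob_le_one (μ := P) (s := A.1)
    simpa using ENNReal.toReal_mono (by simp) this
  have h2 : (Q A.1).toReal ≤ 1 := by
    have := prob_le_one (μ := Q) (s := A.1)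
    simpa using ENNReal.toReal_mono (by simp) this
  have h3 : 0 ≤ (P A.1).toReal := ENNReal.toReal_nonneg
  have h4 : 0 ≤ (Q A.1).toReal := ENNReal.toReal_nonneg
  rw [abs_le]; constructor <;> linarith

/-- the privacy leakage `ε_p = R(P̃) - R(P̆)` satisfies
`ε_p ≥ C₁ · TV(P̃, P̆)` with `C₁ = (1 - (c_b + c₂ c_b I^{p-1})/Ω)/c`. -/
theorem privacy_leakage_bound {W : Type*} [MeasurableSpace W]
    (μ Ptilde Pbreve : Measure W)
    [IsProbabilityMeasure Ptilde] [IsProbabilityMeasure Pbreve]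
    (ptilde pbreve : W → ℝ) (hpt : Measurable ptilde) (hpb : Measurable pbreve)
    (hpt0 : ∀ w, 0 ≤ ptilde w) (hpb0 : ∀ w, 0 ≤ pbreve w)
    (hPt : Ptilde = μ.withDensity (fun w => ENNReal.ofReal (ptilde w)))
    (hPb : Pbreve = μ.withDensity (fun w => ENNReal.ofReal (pbreve w)))
    (R : W → ℝ) (hR : Measurable R) (hR01 : ∀ w, R w ∈ Set.Icc (0 : ℝ) 1)
    (cb c₂ Ω c p : ℝ) (I : ℕ)
    (hcb : 0 < cb) (hc₂ : 0 < c₂) (hΩ : 0 < Ω) (hc : 0 < c)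
    (hI : 0 < I) (hp : p ≤ 1)
    (hdiam : cb + cb * c₂ ≤ Ω)
    (hRlb : ∀ wtilde, ptilde wtilde > 0 →
      R wtilde ≥ 1 - (cb + c₂ * cb * (I : ℝ) ^ (p - 1)) / Ω)
    (hgap : ∀ w wtilde, pbreve w > 0 → ptilde wtilde > 0 →
      R wtilde - R w ≥ R wtilde / c)
    (εp : ℝ) (hεp : εp = ∫ w, R w ∂Ptilde - ∫ w, R w ∂Pbreve) :
    εp ≥ ((1 - (cb + c₂ * cb * (I : ℝ) ^ (p - 1)) / Ω) / c) * tvDist Ptilde Pbreve := by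
  set α : ℝ := 1 - (cb + c₂ * cb * (I : ℝ) ^ (p - 1)) / Ω with hα
  -- α ≥ 0
  have hIone : (1 : ℝ) ≤ (I : ℝ) := by exact_mod_cast hI
  have hrpow : (I : ℝ) ^ (p - 1) ≤ 1 :=
    Real.rpow_le_one_of_one_le_of_nonpos hIone (by linarith)
  have hrpow0 : 0 ≤ (I : ℝ) ^ (p - 1) := Real.rpow_nonneg (by positivity) _
  have hnum : cb + c₂ * cb * (I : ℝ) ^ (p - 1) ≤ Ω := by
    have : c₂ * cb * (I : ℝ) ^ (p - 1) ≤ c₂ * cb * 1 := by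
      apply mul_le_mul_of_nonneg_left hrpow (by positivity)
    nlinarith
  have hα0 : 0 ≤ α := by
    rw [hα, sub_nonneg]
    exact (div_le_one hΩ).2 hnum
  -- integrability of R
  have hint : ∀ (ν : Measure W) [IsProbabilityMeasure ν], Integrable R ν := by
    intro ν _
    refine Integrable.mono' (integrable_const 1) hR.aestronglyMeasurable ?_
    filter_upwards with w
    have := hR01 w
    rw [Real.norm_eq_abs, abs_le]; exact ⟨by linarith [this.1], this.2⟩
  have hintT : Integrable R Ptilde := hint Ptilde
  have hintB : Integrable R Pbreve := hint Pbreve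
  -- a.e. positivity of densities
  have haeT : ∀ᵐ wt ∂Ptilde, 0 < ptilde wt := by
    rw [hPt]; exact ae_density_pos μ ptilde hpt hpt0
  have haeB : ∀ᵐ w ∂Pbreve, 0 < pbreve w := by
    rw [hPb]; exact ae_density_pos μ pbreve hpb hpb0
  -- key bound
  have hkey : ∀ᵐ wt ∂Ptilde, (∫ w, R w ∂Pbreve) + α / c ≤ R wt := by
    filter_upwards [haeT] with wt hwt
    have hbnd : ∀ᵐ w ∂Pbreve, R w ≤ R wt - α / c := by
      filter_upwards [haeB] with w hw
      have hg := hgap w wt hw hwt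
      have hr := hRlb wt hwt
      have : α / c ≤ R wt / c := by gcongr
      linarith
    have := integral_mono_ae hintB (integrable_const (R wt - α / c)) hbnd
    rw [integral_const] at this
    simp at this
    linarith
  have hmain : (∫ w, R w ∂Pbreve) + α / c ≤ ∫ w, R w ∂Ptilde := by
    have := integral_mono_ae (integrable_const ((∫ w, R w ∂Pbreve) + α / c)) hintT hkey
    rw [integral_const] at this
    simpa using this
  have hεbig : α / c ≤ εp := by rw [hεp]; linarith
  have hC0 : 0 ≤ α / c := by positivity
  have htv : tvDist Ptilde Pbreve ≤ 1 := tvDist_le_one _ _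
  calc (α / c) * tvDist Ptilde Pbreve ≤ (α / c) * 1 :=
        mul_le_mul_of_nonneg_left htv hC0
    _ = α / c := mul_one _
    _ ≤ εp := hεbig
end
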